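/- With β as above, the Ricci scalar ρ(x,y) := β(x,y)² - ∑_k y^k ∂β/∂x^k (x,y) equals (4 h(x) ∑ c_{ij} y^i y^j - 4 (∑ c_{ij} x^i y^j)² - 4 ⟨c', y⟩ ∑ c_{ij} x^i y^j - ⟨c', y⟩²) / (2 h(x))². -/

import Mathlib

open Finset

/-- Partial derivative of `f` with respect to the `i`-th coordinate at `x`. -/
noncomputable def pd {n : ℕ} (i : Fin n) (f : (Fin n → ℝ) → ℝ) (x : Fin n → ℝ) : ℝ :=
  deriv (fun t => f (Function.update x i t)) (x i)

/-- Partial derivative with respect to the `i`-th `x`-coordinate. -/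
noncomputable def pdx {n : ℕ} (i : Fin n) (f : (Fin n → ℝ) → (Fin n → ℝ) → ℝ)
    (x y : Fin n → ℝ) : ℝ :=
  deriv (fun t => f (Function.update x i t) y) (x i)

/-- Partial derivative with respect to the `i`-th `y`-coordinate. -/
noncomputable def pdy {n : ℕ} (i : Fin n) (f : (Fin n → ℝ) → (Fin n → ℝ) → ℝ)
    (x y : Fin n → ℝ) : ℝ :=
  deriv (fun t => f x (Function.update y i t)) (y i)

private theorem update_hasDerivAt {n : ℕ} (x : Fin n → ℝ) (k i : Fin n) :
    HasDerivAt (fun t => Function.update x k t i) (if i = k then 1 else 0) (x k) := by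
  by_cases hi : i = k
  · subst hi
    simp only [Function.update_self, if_pos rfl]
    exact hasDerivAt_id (x i)
  · simp only [Function.update_of_ne hi, if_neg hi]
    exact hasDerivAt_const (x k) (x i)

private theorem h_hasDerivAt {n : ℕ} (C : Fin n → Fin n → ℝ) (c' : Fin n → ℝ) (c : ℝ)
    (hsym : ∀ i j, C i j = C j i) (x : Fin n → ℝ) (k : Fin n) :
    HasDerivAt (fun t => (∑ i, ∑ j, C i j * Function.update x k t i * Function.update x k t j)
        + (∑ i, c' i * Function.update x k t i) + c)
      (2 * (∑ i, C i k * x i) + c' k) (x k) := by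
  have key : HasDerivAt (fun t => (∑ i, ∑ j, C i j * Function.update x k t i * Function.update x k t j)
        + (∑ i, c' i * Function.update x k t i) + c)
      ((∑ i, ∑ j, ((C i j * (if i = k then (1:ℝ) else 0)) * x j
          + (C i j * x i) * (if j = k then (1:ℝ) else 0)))
        + (∑ i, c' i * (if i = k then (1:ℝ) else 0)) + 0) (x k) := by
    apply HasDerivAt.add
    apply HasDerivAt.add
    · apply HasDerivAt.fun_sum
      intro i _
      apply HasDerivAt.fun_sum
      intro j _
      have := (((update_hasDerivAt x k i).const_mul (C i j)).fun_mul (update_hasDerivAt x k j))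
      simpa [Function.update_eq_self] using this
    · apply HasDerivAt.fun_sum
      intro i _
      exact (update_hasDerivAt x k i).const_mul (c' i)
    · exact hasDerivAt_const _ _
  convert key using 1
  simp only [mul_ite, mul_one, mul_zero, ite_mul, zero_mul, Finset.sum_add_distrib,
    Finset.sum_ite_eq', Finset.mem_univ, if_true, add_zero]
  rw [Finset.sum_comm]
  simp only [Finset.sum_ite_eq', Finset.mem_univ, if_true]
  have : ∀ j, C k j = C j k := fun j => hsym k j
  simp only [this]
  ring

private theorem num_hasDerivAt {n : ℕ} (C : Fin n → Fin n → ℝ) (c' : Fin n → ℝ)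
    (x y : Fin n → ℝ) (k : Fin n) :
    HasDerivAt (fun t => ∑ j, (2 * (∑ i, C i j * Function.update x k t i) + c' j) * y j)
      (∑ j, 2 * C k j * y j) (x k) := by
  have key : HasDerivAt (fun t => ∑ j, (2 * (∑ i, C i j * Function.update x k t i) + c' j) * y j)
      (∑ j, (2 * (∑ i, C i j * (if i = k then (1:ℝ) else 0))) * y j) (x k) := by
    apply HasDerivAt.fun_sum
    intro j _
    exact (((HasDerivAt.fun_sum (fun i _ =>
      (update_hasDerivAt x k i).const_mul (C i j))).const_mul 2).add_const (c' j)).mul_const (y j)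
  convert key using 1
  simp only [mul_ite, mul_one, mul_zero, Finset.sum_ite_eq', Finset.mem_univ, if_true]

/-- Formula for the Ricci scalar `ρ = β² - S₀β` of the one-form deformation. -/
theorem stmt2 (n : ℕ) (hn : 1 ≤ n) (C : Fin n → Fin n → ℝ) (c' : Fin n → ℝ) (c : ℝ)
    (hsym : ∀ i j, C i j = C j i)
    (h : (Fin n → ℝ) → ℝ)
    (hh : ∀ x, h x = (∑ i, ∑ j, C i j * x i * x j) + (∑ k, c' k * x k) + c)
    (b : Fin n → (Fin n → ℝ) → ℝ)
    (hb : ∀ k x, b k x = -(2 * (∑ i, C i k * x i) + c' k) / (2 * h x))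
    (β : (Fin n → ℝ) → (Fin n → ℝ) → ℝ)
    (hβ : ∀ x y, β x y = ∑ k, b k x * y k) :
    ∀ x y : Fin n → ℝ, h x ≠ 0 →
      (β x y) ^ 2 - (∑ k, y k * pdx k β x y) =
        (4 * h x * (∑ i, ∑ j, C i j * y i * y j)
            - 4 * (∑ i, ∑ j, C i j * x i * y j) ^ 2
            - 4 * (∑ k, c' k * y k) * (∑ i, ∑ j, C i j * x i * y j)
            - (∑ k, c' k * y k) ^ 2)
          / (2 * h x) ^ 2 := by
  intro x y hx
  -- β as a single quotient
  have hβq : ∀ x' : Fin n → ℝ, β x' y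
      = -(∑ j, (2 * (∑ i, C i j * x' i) + c' j) * y j) / (2 * h x') := by
    intro x'
    rw [hβ]
    simp only [hb, div_mul_eq_mul_div, neg_mul]
    rw [← Finset.sum_div, Finset.sum_neg_distrib, neg_div]
  set N : ℝ := ∑ j, (2 * (∑ i, C i j * x i) + c' j) * y j with hN
  -- the partial derivatives of β
  have hderiv : ∀ k : Fin n, pdx k β x y =
      (-(∑ j, 2 * C k j * y j) * (2 * h x) - (-N) * (2 * (2 * (∑ i, C i k * x i) + c' k)))
        / (2 * h x) ^ 2 := by
    intro k
    have hg : HasDerivAt (fun t => h (Function.update x k t))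
        (2 * (∑ i, C i k * x i) + c' k) (x k) := by
      have := h_hasDerivAt C c' c hsym x k
      simpa only [← hh] using this
    have hdiv := (num_hasDerivAt C c' x y k).fun_neg.fun_div (hg.const_mul 2)
      (by simp only [Function.update_eq_self]; exact mul_ne_zero two_ne_zero hx)
    have hfun : (fun t => β (Function.update x k t) y)
        = fun t => (-(∑ j, (2 * (∑ i, C i j * Function.update x k t i) + c' j) * y j))
            / (2 * h (Function.update x k t)) := by
      funext t
      exact hβq (Function.update x k t)
    rw [pdx, hfun]
    have := hdiv.deriv
    simp only [Function.update_eq_self] at this hdiv ⊢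
    rw [this]
  -- β at (x, y)
  have hβx : β x y = -N / (2 * h x) := hβq x
  -- sum of y k * pdx
  have hsum : ∑ k, y k * pdx k β x y
      = (2 * N ^ 2 - 4 * h x * (∑ i, ∑ j, C i j * y i * y j)) / (2 * h x) ^ 2 := by
    have e1 : ∀ k, y k * pdx k β x y
        = (2 * N * ((2 * (∑ i, C i k * x i) + c' k) * y k)
            - 4 * h x * (∑ j, C k j * (y k * y j))) / (2 * h x) ^ 2 := by
      intro k
      rw [hderiv k, mul_div_assoc']
      congr 1
      have hs : ∑ j, (2:ℝ) * C k j * y j = 2 * ∑ j, C k j * y j := by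
        rw [Finset.mul_sum]
        exact Finset.sum_congr rfl fun j _ => by ring
      have hs2 : ∑ j, C k j * (y k * y j) = y k * ∑ j, C k j * y j := by
        rw [Finset.mul_sum]
        exact Finset.sum_congr rfl fun j _ => by ring
      rw [hs, hs2]
      ring
    rw [Finset.sum_congr rfl (fun k _ => e1 k), ← Finset.sum_div]
    congr 1
    rw [Finset.sum_sub_distrib, ← Finset.mul_sum, ← Finset.mul_sum, ← hN]
    rw [show (∑ k, ∑ j, C k j * (y k * y j)) = ∑ i, ∑ j, C i j * y i * y j from
      Finset.sum_congr rfl fun i _ => Finset.sum_congr rfl fun j _ => by ring]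
    ring
  -- N in terms of Q and L
  have hNQL : N = 2 * (∑ i, ∑ j, C i j * x i * y j) + (∑ k, c' k * y k) := by
    rw [hN]
    simp only [add_mul, Finset.sum_add_distrib]
    congr 1
    have lhs : ∑ j, (2 * ∑ i, C i j * x i) * y j = ∑ j, ∑ i, 2 * (C i j * x i * y j) := by
      refine Finset.sum_congr rfl fun j _ => ?_
      rw [Finset.mul_sum, Finset.sum_mul]
      exact Finset.sum_congr rfl fun i _ => by ring
    rw [lhs, Finset.sum_comm]
    simp only [Finset.mul_sum]
  rw [hβx, hsum, hNQL]
  have h2 : (2 * h x) ^ 2 ≠ 0 := pow_ne_zero 2 (mul_ne_zero two_ne_zero hx)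
  field_simp
  ring
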